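/- Let f ∈ C¹([a,b]) be a convex function with f′(x) ≥ λ > 0 for all x ∈ [a,b], and let φ be a continuously differentiable function on [a,b]. Then |∫_a^b e^{2πi f(x)} φ(x) dx| ≤ (1/λ) ( |φ(b)| + ∫_a^b |φ′(x)| dx ). -/

import Mathlib

open Real Set intervalIntegral MeasureTheory

/-- The oscillating exponential `e^{2πiu}`. -/
noncomputable def EE : ℝ → ℂ := fun u => Complex.exp (2 * (π : ℂ) * Complex.I * u)

lemma EE_cont : Continuous EE := by unfold EE; fun_prop

lemma EE_norm (u : ℝ) : ‖EE u‖ = 1 := by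
  unfold EE
  rw [Complex.norm_exp]
  have : (2 * (π : ℂ) * Complex.I * u).re = 0 := by simp
  rw [this, Real.exp_zero]

lemma EE_shift (u : ℝ) : EE (u + 1/2) = - EE u := by
  unfold EE
  have : (2 * (π : ℂ) * Complex.I * ((u + 1/2 : ℝ) : ℂ))
      = 2 * (π : ℂ) * Complex.I * u + π * Complex.I := by
    push_cast; ring
  rw [this, Complex.exp_add, Complex.exp_pi_mul_I, mul_neg_one]

lemma intervalIntegrable_ofReal {g : ℝ → ℝ} {a b : ℝ} (h : IntervalIntegrable g volume a b) :
    IntervalIntegrable (fun u => (g u : ℂ)) volume a b :=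
  ⟨h.1.ofReal, h.2.ofReal⟩

/-- Key oscillation bound: for a nonnegative antitone amplitude `g ≤ M`,
`‖∫_c^d e^{2πiu} g(u) du‖ ≤ M`, by the half-period pairing trick. -/
lemma osc_bound {c d M : ℝ} (hcd : c ≤ d) (hM : 0 ≤ M) {g : ℝ → ℝ}
    (hanti : AntitoneOn g (Set.Icc c d))
    (h0 : ∀ u ∈ Set.Icc c d, 0 ≤ g u) (hgM : ∀ u ∈ Set.Icc c d, g u ≤ M) :
    ‖∫ u in c..d, EE u * (g u : ℂ)‖ ≤ M := by
  have hgi : IntervalIntegrable g volume c d := by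
    apply AntitoneOn.intervalIntegrable; rwa [uIcc_of_le hcd]
  have hsub : ∀ p q : ℝ, c ≤ p → q ≤ d → p ≤ q → IntervalIntegrable g volume p q := by
    intro p q hp hq hpq
    exact hgi.mono_set (by rw [uIcc_of_le hpq, uIcc_of_le hcd]; exact Icc_subset_Icc hp hq)
  have hEg : ∀ p q : ℝ, c ≤ p → q ≤ d → p ≤ q →
      IntervalIntegrable (fun u => EE u * (g u : ℂ)) volume p q := by
    intro p q hp hq hpq
    exact (intervalIntegrable_ofReal (hsub p q hp hq hpq)).continuousOn_mul
      EE_cont.continuousOn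
  have hnorm : ∀ u ∈ Set.Icc c d, ‖EE u * (g u : ℂ)‖ ≤ M := by
    intro u hu
    rw [norm_mul, EE_norm, one_mul, Complex.norm_real, Real.norm_eq_abs,
      abs_of_nonneg (h0 u hu)]
    exact hgM u hu
  by_cases hhalf : d ≤ c + 1
  · have h1 : ‖∫ u in c..d, EE u * (g u : ℂ)‖ ≤ M * |d - c| := by
      apply intervalIntegral.norm_integral_le_of_norm_le_const
      intro x hx
      rw [uIoc_of_le hcd] at hx
      exact hnorm x ⟨le_of_lt hx.1, hx.2⟩
    have : M * |d - c| ≤ M * 1 := by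
      apply mul_le_mul_of_nonneg_left _ hM
      rw [abs_of_nonneg (by linarith)]; linarith
    linarith
  · push_neg at hhalf
    have hc2 : c + 1/2 ≤ d := by linarith
    set I := ∫ u in c..d, EE u * (g u : ℂ) with hI
    set A := ∫ u in c..(c+1/2), EE u * (g u : ℂ) with hA'
    set D := ∫ u in (c+1/2)..d, EE u * (((g u - g (u-1/2) : ℝ)) : ℂ) with hD'
    set C := ∫ u in d..(d+1/2), EE u * ((g (u-1/2) : ℝ) : ℂ) with hC'
    have hJ : (∫ u in (c+1/2)..(d+1/2), EE u * ((g (u - 1/2) : ℝ) : ℂ)) = - I := by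
      rw [← intervalIntegral.integral_comp_add_right (fun u => EE u * ((g (u - 1/2) : ℝ) : ℂ)) (1/2)]
      rw [hI, ← intervalIntegral.integral_neg]
      apply intervalIntegral.integral_congr
      intro u hu
      simp only
      rw [show u + 1/2 - 1/2 = u by ring, EE_shift, neg_mul]
    have hA : IntervalIntegrable (fun u => EE u * (g u : ℂ)) volume c (c+1/2) :=
      hEg c (c+1/2) le_rfl hc2 (by linarith)
    have hB : IntervalIntegrable (fun u => EE u * (g u : ℂ)) volume (c+1/2) d :=
      hEg (c+1/2) d (by linarith) le_rfl hc2
    have hB' : IntervalIntegrable (fun u => EE u * ((g (u-1/2) : ℝ) : ℂ)) volume (c+1/2) d := by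
      apply IntervalIntegrable.continuousOn_mul _ EE_cont.continuousOn
      have h1 := hsub c (d - 1/2) le_rfl (by linarith) (by linarith)
      have h2 := (intervalIntegrable_ofReal h1).comp_sub_right (1/2)
      simpa using h2
    have hC2 : IntervalIntegrable (fun u => EE u * ((g (u-1/2) : ℝ) : ℂ)) volume d (d+1/2) := by
      apply IntervalIntegrable.continuousOn_mul _ EE_cont.continuousOn
      have h1 := hsub (d - 1/2) d (by linarith) le_rfl (by linarith)
      have h2 := (intervalIntegrable_ofReal h1).comp_sub_right (1/2)
      simpa using h2
    have split1 : I = A + ∫ u in (c+1/2)..d, EE u * (g u : ℂ) :=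
      (intervalIntegral.integral_add_adjacent_intervals hA hB).symm
    have split2 : (∫ u in (c+1/2)..(d+1/2), EE u * ((g (u-1/2) : ℝ) : ℂ))
        = (∫ u in (c+1/2)..d, EE u * ((g (u-1/2) : ℝ) : ℂ)) + C :=
      (intervalIntegral.integral_add_adjacent_intervals hB' hC2).symm
    have hD : (∫ u in (c+1/2)..d, EE u * (g u : ℂ))
        - (∫ u in (c+1/2)..d, EE u * ((g (u-1/2) : ℝ) : ℂ)) = D := by
      rw [hD', ← intervalIntegral.integral_sub hB hB']
      apply intervalIntegral.integral_congr
      intro u hu; simp only; push_cast; ring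
    have main : I + I = A + D - C := by
      have e1 : I + I = I - ∫ u in (c+1/2)..(d+1/2), EE u * ((g (u - 1/2) : ℝ) : ℂ) := by
        rw [hJ]; ring
      rw [e1, split1, split2, ← hD]; ring
    have bA : ‖A‖ ≤ M * (1/2) := by
      rw [hA']
      have h1 : ‖∫ u in c..(c+1/2), EE u * (g u : ℂ)‖ ≤ M * |c + 1/2 - c| := by
        apply intervalIntegral.norm_integral_le_of_norm_le_const
        intro x hx
        rw [uIoc_of_le (by linarith : c ≤ c + 1/2)] at hx
        exact hnorm x ⟨le_of_lt hx.1, le_trans hx.2 hc2⟩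
      have : |c + 1/2 - c| = 1/2 := by rw [show c + 1/2 - c = 1/2 by ring]; norm_num
      rw [this] at h1; exact h1
    have bC : ‖C‖ ≤ M * (1/2) := by
      rw [hC']
      have h1 : ‖∫ u in d..(d+1/2), EE u * ((g (u-1/2) : ℝ) : ℂ)‖ ≤ M * |d + 1/2 - d| := by
        apply intervalIntegral.norm_integral_le_of_norm_le_const
        intro x hx
        rw [uIoc_of_le (by linarith : d ≤ d + 1/2)] at hx
        have hmem : x - 1/2 ∈ Set.Icc c d := ⟨by linarith [hx.1], by linarith [hx.2]⟩
        rw [norm_mul, EE_norm, one_mul, Complex.norm_real, Real.norm_eq_abs,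
          abs_of_nonneg (h0 _ hmem)]
        exact hgM _ hmem
      have : |d + 1/2 - d| = 1/2 := by rw [show d + 1/2 - d = 1/2 by ring]; norm_num
      rw [this] at h1; exact h1
    have bD : ‖D‖ ≤ M * (1/2) := by
      have step1 : ‖D‖ ≤ ∫ u in (c+1/2)..d, (g (u-1/2) - g u) := by
        have h1 : ‖D‖ ≤ ∫ u in (c+1/2)..d, ‖EE u * (((g u - g (u-1/2) : ℝ)) : ℂ)‖ := by
          rw [hD']; exact intervalIntegral.norm_integral_le_integral_norm hc2
        have h2 : (∫ u in (c+1/2)..d, ‖EE u * (((g u - g (u-1/2) : ℝ)) : ℂ)‖)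
            = ∫ u in (c+1/2)..d, (g (u-1/2) - g u) := by
          apply intervalIntegral.integral_congr
          intro u hu
          rw [uIcc_of_le hc2] at hu
          have hu1 : u - 1/2 ∈ Set.Icc c d := ⟨by linarith [hu.1], by linarith [hu.2]⟩
          have hu2 : u ∈ Set.Icc c d := ⟨by linarith [hu.1], hu.2⟩
          have hge : g u ≤ g (u - 1/2) := hanti hu1 hu2 (by linarith)
          simp only [norm_mul, EE_norm, one_mul, Complex.norm_real, Real.norm_eq_abs]
          rw [abs_of_nonpos (by linarith)]; ring
        rw [h2] at h1; exact h1
      have hg1 : IntervalIntegrable (fun u => g (u - 1/2)) volume (c+1/2) d := by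
        have h1 := (hsub c (d-1/2) le_rfl (by linarith) (by linarith)).comp_sub_right (1/2)
        simpa using h1
      have hg2 : IntervalIntegrable g volume (c+1/2) d := hsub _ _ (by linarith) le_rfl hc2
      have e1 : (∫ u in (c+1/2)..d, (g (u-1/2) - g u))
          = (∫ u in c..(d-1/2), g u) - ∫ u in (c+1/2)..d, g u := by
        rw [intervalIntegral.integral_sub hg1 hg2]
        congr 1
        have h1 := intervalIntegral.integral_comp_sub_right (a := c+1/2) (b := d) g (1/2)
        rw [h1]; norm_num
      have e2 : (∫ u in c..(d-1/2), g u)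
          = (∫ u in c..(c+1/2), g u) + ∫ u in (c+1/2)..(d-1/2), g u :=
        (intervalIntegral.integral_add_adjacent_intervals
          (hsub _ _ le_rfl (by linarith) (by linarith))
          (hsub _ _ (by linarith) (by linarith) (by linarith))).symm
      have e3 : (∫ u in (c+1/2)..d, g u)
          = (∫ u in (c+1/2)..(d-1/2), g u) + ∫ u in (d-1/2)..d, g u :=
        (intervalIntegral.integral_add_adjacent_intervals
          (hsub _ _ (by linarith) (by linarith) (by linarith))
          (hsub _ _ (by linarith) le_rfl (by linarith))).symm
      have b1 : (∫ u in c..(c+1/2), g u) ≤ M * (1/2) := by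
        have h1 := intervalIntegral.integral_mono_on (by linarith : c ≤ c + 1/2)
          (hsub _ _ le_rfl hc2 (by linarith))
          (_root_.intervalIntegrable_const (c := M))
          (fun x hx => hgM x ⟨hx.1, le_trans hx.2 hc2⟩)
        rw [intervalIntegral.integral_const] at h1
        have : (c + 1/2 - c) • M = M * (1/2) := by rw [smul_eq_mul]; ring
        rw [this] at h1; exact h1
      have b2 : 0 ≤ ∫ u in (d-1/2)..d, g u :=
        intervalIntegral.integral_nonneg (by linarith)
          (fun x hx => h0 x ⟨by linarith [hx.1], hx.2⟩)
      calc ‖D‖ ≤ ∫ u in (c+1/2)..d, (g (u-1/2) - g u) := step1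
        _ = (∫ u in c..(c+1/2), g u) - ∫ u in (d-1/2)..d, g u := by rw [e1, e2, e3]; ring
        _ ≤ M * (1/2) := by linarith
    have htot : ‖I + I‖ ≤ M * (1/2) + M * (1/2) + M * (1/2) := by
      rw [main]
      calc ‖A + D - C‖ ≤ ‖A + D‖ + ‖C‖ := norm_sub_le _ _
        _ ≤ ‖A‖ + ‖D‖ + ‖C‖ := by gcongr; exact norm_add_le _ _
        _ ≤ M * (1/2) + M * (1/2) + M * (1/2) := by gcongr
    have h2I : ‖I + I‖ = 2 * ‖I‖ := by
      rw [show I + I = (2:ℝ) • I by rw [two_smul]]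
      rw [norm_smul]; simp
    rw [h2I] at htot
    linarith

/-- First-derivative (van der Corput type) estimate: if `f ∈ C¹([a,b])` is convex
with `f' ≥ λ > 0`, and `φ` is continuously differentiable on `[a,b]`, then
`|∫_a^b e^{2πi f(x)} φ(x) dx| ≤ (1/λ)(|φ(b)| + ∫_a^b |φ'(x)| dx)`. -/
theorem stmt3 (a b lam : ℝ) (hab : a < b) (hlam : 0 < lam)
    (f φ : ℝ → ℝ)
    (hf : ContDiffOn ℝ 1 f (Set.Icc a b))
    (hconv : ConvexOn ℝ (Set.Icc a b) f)
    (hf' : ∀ x ∈ Set.Icc a b, lam ≤ derivWithin f (Set.Icc a b) x)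
    (hφ : ContDiffOn ℝ 1 φ (Set.Icc a b)) :
    ‖∫ x in a..b,
        Complex.exp (2 * (π : ℂ) * Complex.I * ((f x : ℝ) : ℂ)) * ((φ x : ℝ) : ℂ)‖ ≤
      (1 / lam) * (|φ b| + ∫ x in a..b, |derivWithin φ (Set.Icc a b) x|) := by
  have hab' : a ≤ b := hab.le
  have hs_uniq : UniqueDiffOn ℝ (Set.Icc a b) := uniqueDiffOn_Icc hab
  have hfd : DifferentiableOn ℝ f (Set.Icc a b) := hf.differentiableOn one_ne_zero
  set f' := derivWithin f (Set.Icc a b) with hf'def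
  have hf'cont : ContinuousOn f' (Set.Icc a b) := hf.continuousOn_derivWithin hs_uniq le_rfl
  have hfcont : ContinuousOn f (Set.Icc a b) := hf.continuousOn
  have hmono : MonotoneOn f' (Set.Icc a b) := hconv.monotoneOn_derivWithin hfd
  have hder : ∀ t ∈ Set.Icc a b, HasDerivWithinAt f (f' t) (Set.Icc a b) t :=
    fun t ht => (hfd t ht).hasDerivWithinAt
  have hderI : ∀ t ∈ Set.Ioo a b, HasDerivAt f (f' t) t := by
    intro t ht
    exact (hder t (Ioo_subset_Icc_self ht)).hasDerivAt (Icc_mem_nhds ht.1 ht.2)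
  have hf'pos : ∀ t ∈ Set.Icc a b, 0 < f' t := fun t ht => lt_of_lt_of_le hlam (hf' t ht)
  have hsm : StrictMonoOn f (Set.Icc a b) := by
    apply strictMonoOn_of_hasDerivWithinAt_pos (convex_Icc a b) hfcont (f' := f')
    · intro t ht
      rw [interior_Icc] at ht
      exact (hderI t ht).hasDerivWithinAt
    · intro t ht
      rw [interior_Icc] at ht
      exact hf'pos t (Ioo_subset_Icc_self ht)
  -- inverse function
  have himg : f '' Set.Icc a b = Set.Icc (f a) (f b) := by
    apply Subset.antisymm
    · rintro _ ⟨t, ht, rfl⟩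
      exact ⟨hsm.monotoneOn ⟨le_rfl, hab'⟩ ht ht.1, hsm.monotoneOn ht ⟨hab', le_rfl⟩ ht.2⟩
    · exact intermediate_value_Icc hab' hfcont
  have fab : f a ≤ f b := hsm.monotoneOn ⟨le_rfl, hab'⟩ ⟨hab', le_rfl⟩ hab'
  let e : Set.Icc a b ≃o Set.Icc (f a) (f b) :=
    (hsm.orderIso f _).trans (OrderIso.setCongr _ _ himg)
  let invf : ℝ → ℝ := fun u => (e.symm (Set.projIcc (f a) (f b) fab u) : ℝ)
  have h_e_apply : ∀ (t : ℝ) (ht : t ∈ Set.Icc a b), (e ⟨t, ht⟩ : ℝ) = f t := by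
    intro t ht; rfl
  have hinvf_cont : Continuous invf := by
    apply continuous_subtype_val.comp
    exact (OrderIso.continuous e.symm).comp continuous_projIcc
  have hinv_mem : ∀ u, invf u ∈ Set.Icc a b := fun u => (e.symm _).2
  have hinv_left : ∀ t, t ∈ Set.Icc a b → invf (f t) = t := by
    intro t ht
    have hft : f t ∈ Set.Icc (f a) (f b) := by rw [← himg]; exact mem_image_of_mem f ht
    have h1 : Set.projIcc (f a) (f b) fab (f t) = ⟨f t, hft⟩ := Set.projIcc_of_mem fab hft
    have h2 : e ⟨t, ht⟩ = ⟨f t, hft⟩ := Subtype.ext (h_e_apply t ht)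
    show (e.symm (Set.projIcc (f a) (f b) fab (f t)) : ℝ) = t
    rw [h1, ← h2, e.symm_apply_apply]
  have hinv_mono : Monotone invf := by
    intro u v huv
    exact Subtype.coe_le_coe.2 (e.symm.monotone (Set.monotone_projIcc fab huv))
  -- the amplitude in u-space
  set g : ℝ → ℝ := fun u => 1 / f' (invf u) with hgdef
  have hg_cont : Continuous g := by
    rw [hgdef]
    apply Continuous.div continuous_const
    · exact hf'cont.comp_continuous hinvf_cont hinv_mem
    · intro u; exact ne_of_gt (hf'pos _ (hinv_mem u))
  have hganti : AntitoneOn g (Set.Icc (f a) (f b)) := by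
    intro u _ v _ huv
    have h1 : f' (invf u) ≤ f' (invf v) := hmono (hinv_mem u) (hinv_mem v) (hinv_mono huv)
    exact one_div_le_one_div_of_le (hf'pos _ (hinv_mem u)) h1
  have hg0 : ∀ u, 0 ≤ g u := fun u => le_of_lt (one_div_pos.2 (hf'pos _ (hinv_mem u)))
  have hgM : ∀ u, g u ≤ 1 / lam := fun u =>
    one_div_le_one_div_of_le hlam (hf' _ (hinv_mem u))
  have hlaminv : (0:ℝ) ≤ 1 / lam := by positivity
  -- bound on the primitive F
  have hFbound : ∀ x ∈ Set.Icc a b, ‖∫ t in a..x, EE (f t)‖ ≤ 1 / lam := by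
    intro x hx
    have hax : a ≤ x := hx.1
    have hfax : f a ≤ f x := hsm.monotoneOn ⟨le_rfl, hab'⟩ hx hax
    have hGcont : ContinuousOn (fun u => EE u * ((g u : ℝ) : ℂ)) (f '' Set.uIcc a x) :=
      (EE_cont.mul (Complex.continuous_ofReal.comp hg_cont)).continuousOn
    have hsubst : (∫ t in a..x, f' t • ((fun u => EE u * ((g u : ℝ) : ℂ)) ∘ f) t)
        = ∫ u in (f a)..(f x), EE u * ((g u : ℝ) : ℂ) := by
      apply intervalIntegral.integral_comp_smul_deriv''
      · exact hfcont.mono (by rw [uIcc_of_le hax]; exact Icc_subset_Icc le_rfl hx.2)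
      · intro t ht
        rw [min_eq_left hax, max_eq_right hax] at ht
        exact (hderI t ⟨ht.1, lt_of_lt_of_le ht.2 hx.2⟩).hasDerivWithinAt
      · exact hf'cont.mono (by rw [uIcc_of_le hax]; exact Icc_subset_Icc le_rfl hx.2)
      · exact hGcont
    have heq : (∫ t in a..x, EE (f t))
        = ∫ t in a..x, f' t • ((fun u => EE u * ((g u : ℝ) : ℂ)) ∘ f) t := by
      apply intervalIntegral.integral_congr
      intro t ht
      rw [uIcc_of_le hax] at ht
      have htab : t ∈ Set.Icc a b := ⟨ht.1, le_trans ht.2 hx.2⟩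
      have h1 : invf (f t) = t := hinv_left t htab
      simp only [Function.comp, hgdef, h1]
      rw [Complex.real_smul]
      have hne : (f' t : ℂ) ≠ 0 := by
        exact_mod_cast ne_of_gt (hf'pos t htab)
      field_simp
      rw [mul_assoc, ← Complex.ofReal_mul, mul_one_div_cancel (ne_of_gt (hf'pos t htab)), Complex.ofReal_one, mul_one]
    rw [heq, hsubst]
    exact osc_bound hfax hlaminv
      (hganti.mono (Icc_subset_Icc le_rfl (hsm.monotoneOn hx ⟨hab', le_rfl⟩ hx.2)))
      (fun u _ => hg0 u) (fun u _ => hgM u)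
  -- integration by parts
  set dφ := derivWithin φ (Set.Icc a b) with hdφdef
  have hφd : DifferentiableOn ℝ φ (Set.Icc a b) := hφ.differentiableOn one_ne_zero
  have hφcont : ContinuousOn φ (Set.Icc a b) := hφ.continuousOn
  have hdφcont : ContinuousOn dφ (Set.Icc a b) := hφ.continuousOn_derivWithin hs_uniq le_rfl
  have hφderI : ∀ t ∈ Set.Ioo a b, HasDerivAt φ (dφ t) t := fun t ht =>
    ((hφd t (Ioo_subset_Icc_self ht)).hasDerivWithinAt).hasDerivAt (Icc_mem_nhds ht.1 ht.2)
  have hEf_cont : ContinuousOn (fun t => EE (f t)) (Set.Icc a b) :=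
    EE_cont.comp_continuousOn hfcont
  have hEf_int : IntervalIntegrable (fun t => EE (f t)) volume a b :=
    hEf_cont.intervalIntegrable_of_Icc hab'
  set F : ℝ → ℂ := fun x => ∫ t in a..x, EE (f t) with hFdef
  have hFcont : ContinuousOn F (Set.Icc a b) := by
    have h1 : IntegrableOn (fun t => EE (f t)) (Set.uIcc a b) volume := by
      rw [uIcc_of_le hab']
      exact hEf_cont.integrableOn_Icc
    have h2 := intervalIntegral.continuousOn_primitive_interval h1
    rwa [uIcc_of_le hab'] at h2
  have hFderiv : ∀ t ∈ Set.Ioo a b, HasDerivAt F (EE (f t)) t := by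
    intro t ht
    apply intervalIntegral.integral_hasDerivAt_right
      (hEf_int.mono_set
        (by rw [uIcc_of_le ht.1.le, uIcc_of_le hab']; exact Icc_subset_Icc le_rfl ht.2.le))
    · exact (hEf_cont.mono Ioo_subset_Icc_self).stronglyMeasurableAtFilter isOpen_Ioo t ht
    · exact hEf_cont.continuousAt (Icc_mem_nhds ht.1 ht.2)
  have hφC : ∀ t ∈ Set.Ioo a b, HasDerivAt (fun t => ((φ t : ℝ) : ℂ)) ((dφ t : ℝ) : ℂ) t :=
    fun t ht => (hφderI t ht).ofReal_comp
  have hPderiv : ∀ t ∈ Set.Ioo a b,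
      HasDerivAt (fun t => F t * ((φ t : ℝ) : ℂ))
        (EE (f t) * ((φ t : ℝ) : ℂ) + F t * ((dφ t : ℝ) : ℂ)) t :=
    fun t ht => (hFderiv t ht).mul (hφC t ht)
  have hPcont : ContinuousOn (fun t => F t * ((φ t : ℝ) : ℂ)) (Set.Icc a b) :=
    hFcont.mul (Complex.continuous_ofReal.comp_continuousOn hφcont)
  have hint1 : IntervalIntegrable (fun t => EE (f t) * ((φ t : ℝ) : ℂ)) volume a b :=
    (hEf_cont.mul
      (Complex.continuous_ofReal.comp_continuousOn hφcont)).intervalIntegrable_of_Icc hab'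
  have hint2 : IntervalIntegrable (fun t => F t * ((dφ t : ℝ) : ℂ)) volume a b :=
    (hFcont.mul
      (Complex.continuous_ofReal.comp_continuousOn hdφcont)).intervalIntegrable_of_Icc hab'
  have hIBP : (∫ t in a..b, (EE (f t) * ((φ t : ℝ) : ℂ) + F t * ((dφ t : ℝ) : ℂ)))
      = F b * ((φ b : ℝ) : ℂ) := by
    have h0 : F a = 0 := intervalIntegral.integral_same
    have h1 := intervalIntegral.integral_eq_sub_of_hasDeriv_right_of_le hab' hPcont
      (fun t ht => (hPderiv t ht).hasDerivWithinAt) (hint1.add hint2)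
    rw [h1, h0]; ring
  have hsplit : (∫ t in a..b, EE (f t) * ((φ t : ℝ) : ℂ))
      = F b * ((φ b : ℝ) : ℂ) - ∫ t in a..b, F t * ((dφ t : ℝ) : ℂ) := by
    rw [← hIBP, intervalIntegral.integral_add hint1 hint2]; ring
  have hFb : ‖F b‖ ≤ 1 / lam := hFbound b ⟨hab', le_rfl⟩
  have htail : ‖∫ t in a..b, F t * ((dφ t : ℝ) : ℂ)‖ ≤ (1/lam) * ∫ t in a..b, |dφ t| := by
    have h1 : ‖∫ t in a..b, F t * ((dφ t : ℝ) : ℂ)‖ ≤ ∫ t in a..b, ‖F t * ((dφ t : ℝ) : ℂ)‖ :=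
      intervalIntegral.norm_integral_le_integral_norm hab'
    have heqn : (fun t => ‖F t * ((dφ t : ℝ) : ℂ)‖) = fun t => ‖F t‖ * |dφ t| := by
      funext t; rw [norm_mul, Complex.norm_real, Real.norm_eq_abs]
    rw [heqn] at h1
    have h2 : (∫ t in a..b, ‖F t‖ * |dφ t|) ≤ ∫ t in a..b, (1/lam) * |dφ t| := by
      apply intervalIntegral.integral_mono_on hab'
      · exact (hFcont.norm.mul hdφcont.abs).intervalIntegrable_of_Icc hab'
      · exact (continuousOn_const.mul hdφcont.abs).intervalIntegrable_of_Icc hab'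
      · intro t ht
        exact mul_le_mul_of_nonneg_right (hFbound t ht) (abs_nonneg _)
    have h3 : (∫ t in a..b, (1/lam) * |dφ t|) = (1/lam) * ∫ t in a..b, |dφ t| :=
      intervalIntegral.integral_const_mul _ _
    linarith
  calc ‖∫ x in a..b, EE (f x) * ((φ x : ℝ) : ℂ)‖
      = ‖F b * ((φ b : ℝ) : ℂ) - ∫ t in a..b, F t * ((dφ t : ℝ) : ℂ)‖ := by rw [hsplit]
    _ ≤ ‖F b * ((φ b : ℝ) : ℂ)‖ + ‖∫ t in a..b, F t * ((dφ t : ℝ) : ℂ)‖ := norm_sub_le _ _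
    _ ≤ (1/lam) * |φ b| + (1/lam) * ∫ t in a..b, |dφ t| := by
        apply add_le_add _ htail
        rw [norm_mul, Complex.norm_real, Real.norm_eq_abs]
        exact mul_le_mul_of_nonneg_right hFb (abs_nonneg _)
    _ = (1/lam) * (|φ b| + ∫ t in a..b, |dφ t|) := by ring
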